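/- For integers x ≠ y and α > 0, define the discrete Bessel kernel B^α(x,y) = √α · (J_x(2√α) J_{y+1}(2√α) − J_{x+1}(2√α) J_y(2√α)) / (x − y). Then B^α(x,y) = Σ_{k=1}^∞ J_{x+k}(2√α) · J_{y+k}(2√α). -/

import Mathlib

open Filter Topology

/-- The Bessel function of the first kind of nonnegative integer order `n`. -/
noncomputable def besselJ (n : ℕ) (t : ℝ) : ℝ :=
  ∑' m : ℕ, (-1 : ℝ) ^ m * (t / 2) ^ (n + 2 * m) /
    ((Nat.factorial m : ℝ) * (Nat.factorial (n + m) : ℝ))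

lemma besselJ_summable (n : ℕ) (t : ℝ) :
    Summable (fun m : ℕ => (-1 : ℝ) ^ m * (t / 2) ^ (n + 2 * m) /
      ((Nat.factorial m : ℝ) * (Nat.factorial (n + m) : ℝ))) := by
  apply Summable.of_norm
  have hs : Summable (fun m : ℕ => |t / 2| ^ n * (((t / 2) ^ 2) ^ m / (Nat.factorial m : ℝ))) :=
    (Real.summable_pow_div_factorial _).mul_left _
  refine hs.of_nonneg_of_le (fun m => norm_nonneg _) (fun m => ?_)
  rw [Real.norm_eq_abs, abs_div, abs_mul, abs_pow, abs_pow, abs_neg, abs_one, one_pow, one_mul]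
  rw [abs_mul, Nat.abs_cast, Nat.abs_cast]
  have h1 : |t / 2| ^ (n + 2 * m) = |t / 2| ^ n * ((t / 2) ^ 2) ^ m := by
    rw [pow_add, pow_mul, sq_abs]
  rw [h1, mul_div_assoc]
  refine mul_le_mul_of_nonneg_left ?_ (by positivity)
  refine div_le_div_of_nonneg_left (by positivity) (by positivity) ?_
  calc (Nat.factorial m : ℝ) = (Nat.factorial m : ℝ) * 1 := by ring
    _ ≤ (Nat.factorial m : ℝ) * (Nat.factorial (n + m) : ℝ) := by
      gcongr
      exact_mod_cast Nat.one_le_iff_ne_zero.2 (Nat.factorial_ne_zero _)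

noncomputable def besselE (t : ℝ) : ℝ := ∑' m : ℕ, ((t / 2) ^ 2) ^ m / (Nat.factorial m : ℝ)

lemma besselJ_abs_le (n : ℕ) (t : ℝ) :
    |besselJ n t| ≤ besselE t * (|t / 2| ^ n / (Nat.factorial n : ℝ)) := by
  have hsum := besselJ_summable n t
  have h1 : |besselJ n t| ≤ ∑' m : ℕ, |(-1 : ℝ) ^ m * (t / 2) ^ (n + 2 * m) /
      ((Nat.factorial m : ℝ) * (Nat.factorial (n + m) : ℝ))| := by
    have := norm_tsum_le_tsum_norm (f := fun m : ℕ => (-1 : ℝ) ^ m * (t / 2) ^ (n + 2 * m) /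
      ((Nat.factorial m : ℝ) * (Nat.factorial (n + m) : ℝ)))
      (by simpa only [Real.norm_eq_abs] using hsum.abs)
    simpa only [Real.norm_eq_abs, besselJ] using this
  refine h1.trans ?_
  have hg : Summable (fun m : ℕ => (((t/2)^2) ^ m / (Nat.factorial m : ℝ)) *
      (|t / 2| ^ n / (Nat.factorial n : ℝ))) :=
    (Real.summable_pow_div_factorial _).mul_right _
  have h2 : ∀ m : ℕ, |(-1 : ℝ) ^ m * (t / 2) ^ (n + 2 * m) /
      ((Nat.factorial m : ℝ) * (Nat.factorial (n + m) : ℝ))| ≤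
      (((t/2)^2) ^ m / (Nat.factorial m : ℝ)) * (|t / 2| ^ n / (Nat.factorial n : ℝ)) := by
    intro m
    rw [abs_div, abs_mul, abs_pow, abs_pow, abs_neg, abs_one, one_pow, one_mul,
      abs_mul, Nat.abs_cast, Nat.abs_cast]
    have hexp : |t / 2| ^ (n + 2 * m) = ((t / 2) ^ 2) ^ m * |t / 2| ^ n := by
      rw [pow_add, pow_mul, sq_abs, mul_comm]
    rw [hexp, div_le_iff₀ (by positivity)]
    have hfle : (Nat.factorial m : ℝ) * (Nat.factorial n : ℝ) ≤
        (Nat.factorial m : ℝ) * (Nat.factorial (n + m) : ℝ) := by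
      gcongr
      exact Nat.le_add_right n m
    calc ((t / 2) ^ 2) ^ m * |t / 2| ^ n
        = (((t/2)^2) ^ m / (Nat.factorial m : ℝ)) * (|t / 2| ^ n / (Nat.factorial n : ℝ)) *
          ((Nat.factorial m : ℝ) * (Nat.factorial n : ℝ)) := by
          have hm : (Nat.factorial m : ℝ) ≠ 0 := Nat.cast_ne_zero.2 (Nat.factorial_ne_zero _)
          have hn : (Nat.factorial n : ℝ) ≠ 0 := Nat.cast_ne_zero.2 (Nat.factorial_ne_zero _)
          field_simp
      _ ≤ _ := by gcongr
  have h3 := Summable.tsum_le_tsum h2 hsum.abs hg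
  refine h3.trans ?_
  rw [tsum_mul_right, besselE]

lemma besselJ_tendsto (t : ℝ) : Tendsto (fun n => besselJ n t) atTop (nhds 0) := by
  apply squeeze_zero_norm (fun n => besselJ_abs_le n t)
  have h : Tendsto (fun n : ℕ => |t / 2| ^ n / (Nat.factorial n : ℝ)) atTop (nhds 0) :=
    FloorSemiring.tendsto_pow_div_factorial_atTop _
  simpa using h.const_mul (besselE t)

lemma besselE_nonneg (t : ℝ) : 0 ≤ besselE t :=
  tsum_nonneg (fun m => by positivity)

lemma besselJ_abs_le' (n : ℕ) (t : ℝ) :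
    |besselJ n t| ≤ besselE t * Real.exp |t / 2| := by
  refine (besselJ_abs_le n t).trans ?_
  gcongr
  · exact besselE_nonneg t
  · calc |t / 2| ^ n / (Nat.factorial n : ℝ) ≤
        ∑' m : ℕ, |t / 2| ^ m / (Nat.factorial m : ℝ) :=
        Summable.le_tsum (Real.summable_pow_div_factorial _) n (fun i _ => by positivity)
      _ ≤ Real.exp |t / 2| := by
        rw [Real.exp_eq_exp_ℝ, NormedSpace.exp_eq_tsum_div]
-- term of besselJ
noncomputable def bterm (n : ℕ) (t : ℝ) (m : ℕ) : ℝ :=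
  (-1 : ℝ) ^ m * (t / 2) ^ (n + 2 * m) /
    ((Nat.factorial m : ℝ) * (Nat.factorial (n + m) : ℝ))

lemma besselJ_eq_tsum (n : ℕ) (t : ℝ) : besselJ n t = ∑' m, bterm n t m := rfl

lemma bterm_summable (n : ℕ) (t : ℝ) : Summable (bterm n t) := besselJ_summable n t

lemma besselJ_rec (n : ℕ) (t : ℝ) :
    t * (besselJ n t + besselJ (n + 2) t) = 2 * (n + 1) * besselJ (n + 1) t := by
  have hA : Summable (fun m => t * bterm n t m) := (bterm_summable n t).mul_left t
  have hB : Summable (fun m => t * bterm (n + 2) t m) := (bterm_summable (n + 2) t).mul_left t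
  set D : ℕ → ℝ := fun m => Nat.rec 0 (fun m' _ => t * bterm (n + 2) t m') m with hD
  have hD0 : D 0 = 0 := rfl
  have hDs : ∀ m, D (m + 1) = t * bterm (n + 2) t m := fun m => rfl
  have hDsum : Summable D := by
    rw [← summable_nat_add_iff 1]
    simpa only [hDs] using hB
  have htD : ∑' m, D m = t * besselJ (n + 2) t := by
    rw [Summable.tsum_eq_zero_add hDsum, hD0, zero_add]
    simp only [hDs]
    rw [tsum_mul_left, besselJ_eq_tsum]
  have hkey : ∀ m, t * bterm n t m + D m = 2 * (n + 1) * bterm (n + 1) t m := by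
    intro m
    cases m with
    | zero =>
      rw [hD0]
      simp only [bterm, Nat.add_zero, Nat.mul_zero, pow_zero, one_mul, Nat.factorial_zero,
        Nat.factorial_succ, add_zero]
      have hn : (Nat.factorial n : ℝ) ≠ 0 := Nat.cast_ne_zero.2 (Nat.factorial_ne_zero _)
      rw [pow_succ]
      push_cast
      field_simp
    | succ m =>
      rw [hDs]
      simp only [bterm]
      have e1 : n + 2 * (m + 1) = (n + 2 * m) + 2 := by omega
      have e2 : n + 2 + 2 * m = (n + 2 * m) + 2 := by omega
      have e3 : n + 1 + 2 * (m + 1) = (n + 2 * m) + 3 := by omega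
      have e4 : n + (m + 1) = (n + m) + 1 := by omega
      have e5 : n + 2 + m = (n + m) + 2 := by omega
      have e6 : n + 1 + (m + 1) = (n + m) + 2 := by omega
      rw [e1, e2, e3, e4, e5, e6]
      have hm : (Nat.factorial m : ℝ) ≠ 0 := Nat.cast_ne_zero.2 (Nat.factorial_ne_zero _)
      have hnm : (Nat.factorial (n + m) : ℝ) ≠ 0 := Nat.cast_ne_zero.2 (Nat.factorial_ne_zero _)
      simp only [Nat.factorial_succ, pow_succ]
      push_cast
      field_simp
      ring
  calc t * (besselJ n t + besselJ (n + 2) t)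
      = ∑' m, (t * bterm n t m) + ∑' m, D m := by
        rw [htD, besselJ_eq_tsum, tsum_mul_left]
        ring
    _ = ∑' m, (t * bterm n t m + D m) := (Summable.tsum_add hA hDsum).symm
    _ = ∑' m, 2 * ((n : ℝ) + 1) * bterm (n + 1) t m := by
        refine tsum_congr fun m => ?_
        rw [hkey m]
    _ = 2 * (n + 1) * besselJ (n + 1) t := by rw [tsum_mul_left, besselJ_eq_tsum]
/-- The Bessel function of the first kind of integer order, using `J_{-n} = (-1)^n J_n`. -/
noncomputable def besselJInt (n : ℤ) (t : ℝ) : ℝ :=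
  if 0 ≤ n then besselJ n.toNat t else (-1 : ℝ) ^ (-n).toNat * besselJ (-n).toNat t

lemma besselJInt_natCast (p : ℕ) (t : ℝ) : besselJInt (p : ℤ) t = besselJ p t := by
  simp [besselJInt]

lemma besselJInt_neg_natCast (p : ℕ) (t : ℝ) :
    besselJInt (-(p : ℤ)) t = (-1 : ℝ) ^ p * besselJ p t := by
  cases p with
  | zero => simp [besselJInt]
  | succ q =>
    rw [besselJInt, if_neg (by omega)]
    norm_num

lemma besselJInt_abs (n : ℤ) (t : ℝ) : |besselJInt n t| = |besselJ n.natAbs t| := by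
  rcases Int.eq_nat_or_neg n with ⟨p, rfl | rfl⟩
  · rw [besselJInt_natCast]; simp
  · rw [besselJInt_neg_natCast, abs_mul, abs_pow, abs_neg, abs_one, one_pow, one_mul]
    simp

lemma besselJInt_rec (m : ℤ) (t : ℝ) :
    t * (besselJInt (m - 1) t + besselJInt (m + 1) t) = 2 * (m : ℝ) * besselJInt m t := by
  rcases Int.eq_nat_or_neg m with ⟨p, rfl | rfl⟩
  · cases p with
    | zero =>
      have h1 : ((0 : ℕ) : ℤ) - 1 = -((1 : ℕ) : ℤ) := by norm_num
      have h2 : ((0 : ℕ) : ℤ) + 1 = ((1 : ℕ) : ℤ) := by norm_num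
      rw [h1, h2, besselJInt_neg_natCast, besselJInt_natCast]
      push_cast
      ring
    | succ q =>
      have h1 : ((q + 1 : ℕ) : ℤ) - 1 = ((q : ℕ) : ℤ) := by push_cast; ring
      have h2 : ((q + 1 : ℕ) : ℤ) + 1 = ((q + 2 : ℕ) : ℤ) := by push_cast; ring
      rw [h1, h2, besselJInt_natCast, besselJInt_natCast, besselJInt_natCast]
      have := besselJ_rec q t
      push_cast
      push_cast at this
      linarith [this]
  · cases p with
    | zero =>
      have h1 : -((0 : ℕ) : ℤ) - 1 = -((1 : ℕ) : ℤ) := by norm_num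
      have h2 : -((0 : ℕ) : ℤ) + 1 = ((1 : ℕ) : ℤ) := by norm_num
      rw [h1, h2, besselJInt_neg_natCast, besselJInt_natCast]
      push_cast
      ring
    | succ q =>
      have h1 : -((q + 1 : ℕ) : ℤ) - 1 = -((q + 2 : ℕ) : ℤ) := by push_cast; ring
      have h2 : -((q + 1 : ℕ) : ℤ) + 1 = -((q : ℕ) : ℤ) := by push_cast; ring
      rw [h1, h2, besselJInt_neg_natCast, besselJInt_neg_natCast, besselJInt_neg_natCast]
      have hrec := besselJ_rec q t
      push_cast
      push_cast at hrec
      have hpow2 : (-1 : ℝ) ^ (q + 2) = (-1 : ℝ) ^ q := by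
        rw [pow_add]; norm_num
      have hpow1 : (-1 : ℝ) ^ (q + 1) = -(-1 : ℝ) ^ q := by
        rw [pow_succ]; ring
      rw [hpow2, hpow1]
      linear_combination ((-1 : ℝ) ^ q) * hrec
lemma kernel_step (s : ℝ) (hs : s ≠ 0) (a b : ℤ) (hab : a ≠ b) :
    s * (besselJInt a (2*s) * besselJInt (b+1) (2*s) -
        besselJInt (a+1) (2*s) * besselJInt b (2*s)) / ((a:ℝ) - (b:ℝ)) =
      besselJInt (a+1) (2*s) * besselJInt (b+1) (2*s) +
      s * (besselJInt (a+1) (2*s) * besselJInt (b+2) (2*s) -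
        besselJInt (a+2) (2*s) * besselJInt (b+1) (2*s)) / ((a:ℝ) - (b:ℝ)) := by
  have hab' : (a:ℝ) - (b:ℝ) ≠ 0 := by
    intro h
    exact hab (by exact_mod_cast sub_eq_zero.1 h)
  have hA := besselJInt_rec (a+1) (2*s)
  have hB := besselJInt_rec (b+1) (2*s)
  rw [add_sub_cancel_right] at hA hB
  push_cast at hA hB
  have key : s * (besselJInt a (2*s) * besselJInt (b+1) (2*s) -
      besselJInt (a+1) (2*s) * besselJInt b (2*s)) =
      ((a:ℝ) - (b:ℝ)) * (besselJInt (a+1) (2*s) * besselJInt (b+1) (2*s)) +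
      s * (besselJInt (a+1) (2*s) * besselJInt (b+1+1) (2*s) -
        besselJInt (a+1+1) (2*s) * besselJInt (b+1) (2*s)) := by
    linear_combination (besselJInt (b+1) (2*s) / 2) * hA - (besselJInt (a+1) (2*s) / 2) * hB
  have e1 : b + 1 + 1 = b + 2 := by ring
  have e2 : a + 1 + 1 = a + 2 := by ring
  rw [e1, e2] at key
  rw [key, add_div, mul_div_cancel_left₀ _ hab']

lemma besselJInt_tendsto (x : ℤ) (t : ℝ) :
    Filter.Tendsto (fun N : ℕ => besselJInt (x + N) t) Filter.atTop (nhds 0) := by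
  have h1 : Filter.Tendsto (fun N : ℕ => (x + N).toNat) Filter.atTop Filter.atTop := by
    apply Filter.tendsto_atTop_atTop.2
    intro b
    exact ⟨b + x.natAbs, fun n hn => by omega⟩
  have h2 := (besselJ_tendsto t).comp h1
  apply h2.congr'
  filter_upwards [Filter.eventually_ge_atTop x.natAbs] with N hN
  have hx : (0:ℤ) ≤ x + N := by omega
  simp only [Function.comp, besselJInt, if_pos hx]

lemma bessel_prod_summable (x y : ℤ) (t : ℝ) :
    Summable (fun k : ℕ => besselJInt (x + k + 1) t * besselJInt (y + k + 1) t) := by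
  set k0 := x.natAbs with hk0
  rw [← summable_nat_add_iff k0]
  set a := (x + k0 + 1).toNat with ha
  set C : ℝ := besselE t * |t/2| ^ a * (besselE t * Real.exp |t/2|) with hC
  apply Summable.of_norm_bounded
    ((Real.summable_pow_div_factorial _).mul_left C)
  intro n
  rw [Real.norm_eq_abs, abs_mul]
  have hb2 : |besselJInt (y + ↑(n + k0) + 1) t| ≤ besselE t * Real.exp |t/2| := by
    rw [besselJInt_abs]
    exact besselJ_abs_le' _ t
  have hnatabs : (x + ↑(n + k0) + 1).natAbs = a + n := by omega
  have hb1 : |besselJInt (x + ↑(n + k0) + 1) t| ≤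
      besselE t * (|t/2| ^ (a + n) / (Nat.factorial (a + n) : ℝ)) := by
    rw [besselJInt_abs, hnatabs]
    exact besselJ_abs_le _ t
  have hb1' : besselE t * (|t/2| ^ (a + n) / (Nat.factorial (a + n) : ℝ)) ≤
      besselE t * |t/2| ^ a * (|t/2| ^ n / (Nat.factorial n : ℝ)) := by
    have hfac : |t/2| ^ (a + n) / (Nat.factorial (a + n) : ℝ) ≤
        |t/2| ^ a * (|t/2| ^ n / (Nat.factorial n : ℝ)) := by
      rw [pow_add, mul_div_assoc]
      refine mul_le_mul_of_nonneg_left ?_ (by positivity)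
      refine div_le_div_of_nonneg_left (by positivity) (by positivity) ?_
      exact_mod_cast Nat.factorial_le (Nat.le_add_left n a)
    rw [mul_assoc]
    exact mul_le_mul_of_nonneg_left hfac (besselE_nonneg t)
  calc |besselJInt (x + ↑(n + k0) + 1) t| * |besselJInt (y + ↑(n + k0) + 1) t|
      ≤ (besselE t * |t/2| ^ a * (|t/2| ^ n / (Nat.factorial n : ℝ))) *
        (besselE t * Real.exp |t/2|) := by
        refine mul_le_mul (hb1.trans hb1') hb2 (abs_nonneg _) (by have := besselE_nonneg t; positivity)
    _ = C * (|t/2| ^ n / (Nat.factorial n : ℝ)) := by rw [hC]; ring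
/-- for integers `x ≠ y` and `α > 0`, the discrete Bessel kernel
`B^α(x,y) = √α (J_x J_{y+1} − J_{x+1} J_y)/(x − y)` (all Bessel functions at `2√α`)
equals `Σ_{k=1}^∞ J_{x+k}(2√α) J_{y+k}(2√α)`. -/
theorem discrete_bessel_kernel_series (α : ℝ) (hα : 0 < α) (x y : ℤ) (hxy : x ≠ y) :
    Real.sqrt α *
        (besselJInt x (2 * Real.sqrt α) * besselJInt (y + 1) (2 * Real.sqrt α) -
          besselJInt (x + 1) (2 * Real.sqrt α) * besselJInt y (2 * Real.sqrt α)) /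
        ((x : ℝ) - (y : ℝ)) =
      ∑' k : ℕ, besselJInt (x + k + 1) (2 * Real.sqrt α) *
        besselJInt (y + k + 1) (2 * Real.sqrt α) := by
  set s := Real.sqrt α with hsdef
  have hs : 0 < s := Real.sqrt_pos.2 hα
  set t := 2 * s with htdef
  set J : ℤ → ℝ := fun n => besselJInt n t with hJ
  set B : ℤ → ℤ → ℝ :=
    fun a b => s * (J a * J (b + 1) - J (a + 1) * J b) / ((a : ℝ) - (b : ℝ)) with hB
  set f : ℕ → ℝ := fun k => J (x + k + 1) * J (y + k + 1) with hf
  show B x y = ∑' k : ℕ, f k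
  have hstep : ∀ a b : ℤ, a ≠ b → B a b = J (a + 1) * J (b + 1) + B (a + 1) (b + 1) := by
    intro a b hab
    have e1 : ((a + 1 : ℤ) : ℝ) - ((b + 1 : ℤ) : ℝ) = (a : ℝ) - (b : ℝ) := by push_cast; ring
    have e2 : b + 1 + 1 = b + 2 := by ring
    have e3 : a + 1 + 1 = a + 2 := by ring
    simp only [hB, hJ, e1, e2, e3]
    exact kernel_step s hs.ne' a b hab
  have htel : ∀ N : ℕ, B x y = (∑ k ∈ Finset.range N, f k) + B (x + N) (y + N) := by
    intro N
    induction N with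
    | zero => simp
    | succ N ih =>
      rw [Finset.sum_range_succ, ih, hstep (x + N) (y + N) (by omega)]
      have e1 : x + (N : ℤ) + 1 = x + ((N + 1 : ℕ) : ℤ) := by push_cast; ring
      have e2 : y + (N : ℤ) + 1 = y + ((N + 1 : ℕ) : ℤ) := by push_cast; ring
      rw [hf]
      simp only [e1, e2]
      ring
  have hBN : Filter.Tendsto (fun N : ℕ => B (x + N) (y + N)) Filter.atTop (nhds 0) := by
    have l1 : Filter.Tendsto (fun N : ℕ => J (x + N)) Filter.atTop (nhds 0) :=
      besselJInt_tendsto x t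
    have l2 : Filter.Tendsto (fun N : ℕ => J (y + N + 1)) Filter.atTop (nhds 0) := by
      refine (besselJInt_tendsto (y + 1) t).congr fun N => ?_
      congr 1
      ring
    have l3 : Filter.Tendsto (fun N : ℕ => J (x + N + 1)) Filter.atTop (nhds 0) := by
      refine (besselJInt_tendsto (x + 1) t).congr fun N => ?_
      congr 1
      ring
    have l4 : Filter.Tendsto (fun N : ℕ => J (y + N)) Filter.atTop (nhds 0) :=
      besselJInt_tendsto y t
    have hnum : Filter.Tendsto
        (fun N : ℕ => s * (J (x + N) * J (y + N + 1) - J (x + N + 1) * J (y + N)))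
        Filter.atTop (nhds 0) := by
      have := ((l1.mul l2).sub (l3.mul l4)).const_mul s
      simpa using this
    have hden : ∀ N : ℕ, ((x + N : ℤ) : ℝ) - ((y + N : ℤ) : ℝ) = (x : ℝ) - (y : ℝ) := by
      intro N; push_cast; ring
    have : Filter.Tendsto
        (fun N : ℕ => s * (J (x + N) * J (y + N + 1) - J (x + N + 1) * J (y + N)) /
          ((x : ℝ) - (y : ℝ))) Filter.atTop (nhds 0) := by
      simpa using hnum.div_const ((x : ℝ) - (y : ℝ))
    refine this.congr fun N => ?_
    simp only [hB, hden N]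
  have hsumf : Summable f := bessel_prod_summable x y t
  have hS : Filter.Tendsto (fun N : ℕ => ∑ k ∈ Finset.range N, f k)
      Filter.atTop (nhds (B x y)) := by
    have heq : (fun N : ℕ => ∑ k ∈ Finset.range N, f k) =
        fun N : ℕ => B x y - B (x + N) (y + N) := by
      funext N
      have := htel N
      linarith
    rw [heq]
    simpa using tendsto_const_nhds.sub hBN
  exact tendsto_nhds_unique hS hsumf.hasSum.tendsto_sum_nat
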